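/- The S-linear map N^2 → N^4 sending a row vector v = (n₁, n₂) to vX̄ = (s n₁, s n₂, t n₁, t n₂) has kernel equal to mN^2 = (mN)^2, the submodule of N^2 consisting of vectors both of whose coordinates lie in mN; in particular, this kernel is nonzero (it has length 2). -/

import Mathlib

set_option maxHeartbeats 1000000
set_option synthInstance.maxHeartbeats 400000

open CategoryTheory MvPolynomial

noncomputable section

/-- The ideal `(s², st, t²)` of the polynomial ring `K[s,t]`. -/
def sIdeal (K : Type) [Field K] : Ideal (MvPolynomial (Fin 2) K) :=
  Ideal.span {(X 0) ^ 2, (X 0) * (X 1), (X 1) ^ 2}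

/-- The ring `S = K[s,t]/(s², st, t²)`. -/
abbrev Sring (K : Type) [Field K] : Type := MvPolynomial (Fin 2) K ⧸ sIdeal K

/-- The image `s` of the first variable in `S`. -/
def sElt (K : Type) [Field K] : Sring K := Ideal.Quotient.mk _ (X 0)

/-- The image `t` of the second variable in `S`. -/
def tElt (K : Type) [Field K] : Sring K := Ideal.Quotient.mk _ (X 1)

/-- The submodule `U` of `S²` generated by `(t,0)`, `(0,s)` and `(s,t)`. -/
def Usub (K : Type) [Field K] : Submodule (Sring K) (Fin 2 → Sring K) :=
  Submodule.span _ {![tElt K, 0], ![0, sElt K], ![sElt K, tElt K]}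

/-- The module `N = S²/U`. -/
abbrev Nmod (K : Type) [Field K] : Type := (Fin 2 → Sring K) ⧸ Usub K

/-- The maximal ideal `m = (s,t)` of `S`. -/
def mIdeal (K : Type) [Field K] : Ideal (Sring K) := Ideal.span {sElt K, tElt K}

/-- The matrix `X̄` with rows `(s,0,t,0)` and `(0,s,0,t)`. -/
def Xbar (K : Type) [Field K] : Matrix (Fin 2) (Fin 4) (Sring K) :=
  !![sElt K, 0, tElt K, 0; 0, sElt K, 0, tElt K]

/-- The matrix `Ȳ = (sI₄ | tI₄)`. -/
def Ybar (K : Type) [Field K] : Matrix (Fin 4) (Fin 8) (Sring K) :=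
  fun i j => if (j : ℕ) = (i : ℕ) then sElt K
    else if (j : ℕ) = (i : ℕ) + 4 then tElt K else 0

/-- The `S`-linear map `v ↦ v A` on row vectors with entries in an `S`-module `M`,
for a matrix `A` over `S`. -/
def rowVecMulMap {S : Type} [CommRing S] {M : Type} [AddCommGroup M] [Module S M]
    {a b : ℕ} (A : Matrix (Fin a) (Fin b) S) : (Fin a → M) →ₗ[S] (Fin b → M) where
  toFun v := fun j => ∑ i, A i j • v i
  map_add' u v := by
    funext j
    simp [smul_add, Finset.sum_add_distrib]
  map_smul' c v := by
    funext j
    show (∑ i, A i j • (c • v) i) = c • ∑ i, A i j • v i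
    rw [Finset.smul_sum]
    refine Finset.sum_congr rfl fun i _ => ?_
    rw [Pi.smul_apply, smul_comm]


open TrivSqZeroExt

variable (K : Type) [Field K]

lemma ss : sElt K * sElt K = 0 := by
  rw [sElt, ← map_mul, Ideal.Quotient.eq_zero_iff_mem, ← pow_two]
  exact Ideal.subset_span (by simp [Set.mem_insert_iff])
lemma st : sElt K * tElt K = 0 := by
  rw [sElt, tElt, ← map_mul, Ideal.Quotient.eq_zero_iff_mem]
  exact Ideal.subset_span (by simp [Set.mem_insert_iff])
lemma tt : tElt K * tElt K = 0 := by
  rw [tElt, ← map_mul, Ideal.Quotient.eq_zero_iff_mem, ← pow_two]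
  exact Ideal.subset_span (by simp [Set.mem_insert_iff])

abbrev Tring (K : Type) [Field K] := TrivSqZeroExt K (Fin 2 → K)

def phi : Sring K →ₐ[K] Tring K :=
  Ideal.Quotient.liftₐ _ (aeval (fun i => inr (Pi.single (M := fun _ => K) i 1))) (by
    intro a ha
    refine (Ideal.span_le (I := RingHom.ker _)).2 ?_ ha
    rintro x (rfl | rfl | rfl) <;>
      simp [RingHom.mem_ker, pow_two, inr_mul_inr])

@[simp] lemma phi_s : phi K (sElt K) = inr (Pi.single 0 1) := by
  erw [phi, sElt, Ideal.Quotient.liftₐ_apply, Ideal.Quotient.lift_mk]; simp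
@[simp] lemma phi_t : phi K (tElt K) = inr (Pi.single 1 1) := by
  erw [phi, tElt, Ideal.Quotient.liftₐ_apply, Ideal.Quotient.lift_mk]; simp

def gmap : (Fin 2 → K) →ₗ[K] Sring K where
  toFun v := v 0 • sElt K + v 1 • tElt K
  map_add' u v := by simp [add_smul]; ring
  map_smul' c v := by simp [smul_smul, smul_add]

def psi : Tring K →ₐ[K] Sring K :=
  TrivSqZeroExt.lift (Algebra.ofId K _) (gmap K)
    (by intro x y
        show (x 0 • sElt K + x 1 • tElt K) * (y 0 • sElt K + y 1 • tElt K) = 0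
        rw [add_mul, mul_add, mul_add, smul_mul_smul_comm, smul_mul_smul_comm,
          smul_mul_smul_comm, smul_mul_smul_comm, ss, st, mul_comm (tElt K) (sElt K), st, tt]
        simp)
    (by intro r x
        show gmap K (r • x) = _
        rw [map_smul, Algebra.ofId_apply]
        exact Algebra.smul_def (A := Sring K) _ _)
    (by intro r x
        show gmap K ((MulOpposite.op r) • x) = _
        rw [op_smul_eq_smul, map_smul, Algebra.ofId_apply]
        rw [Algebra.smul_def (A := Sring K), mul_comm])

lemma psi_phi (x : Sring K) : psi K (phi K x) = x := by
  have : (psi K).comp (phi K) = AlgHom.id K (Sring K) := by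
    apply Ideal.Quotient.algHom_ext
    apply MvPolynomial.algHom_ext
    intro i
    fin_cases i
    · show psi K (phi K (sElt K)) = sElt K
      rw [phi_s]; simp [psi, gmap, lift_apply_inr, sElt, tElt]
    · show psi K (phi K (tElt K)) = tElt K
      rw [phi_t]; simp [psi, gmap, lift_apply_inr, sElt, tElt]
  exact congrArg (·  x) this |>.trans rfl

/-- abbreviation for algebraMap -/
def Cm (K : Type) [Field K] : K → Sring K := algebraMap K (Sring K)

lemma ksmul_def (a : K) (x : Sring K) : a • x = algebraMap K (Sring K) a * x :=
  Algebra.smul_def a x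

lemma Cm_add (a b : K) : Cm K (a + b) = Cm K a + Cm K b := map_add _ _ _
lemma Cm_neg (a : K) : Cm K (-a) = - Cm K a := map_neg _ _

lemma Srepr (x : Sring K) :
    x = Cm K (fst (phi K x)) + Cm K (snd (phi K x) 0) * sElt K
      + Cm K (snd (phi K x) 1) * tElt K := by
  conv_lhs => rw [← psi_phi K x]
  rw [psi, lift_def, Algebra.ofId_apply]
  show _ + gmap K _ = _
  rw [gmap]
  simp only [LinearMap.coe_mk, AddHom.coe_mk]
  rw [Algebra.smul_def (snd (phi K x) 0) (sElt K), Algebra.smul_def (snd (phi K x) 1) (tElt K), Cm, add_assoc]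

lemma mul_s (x : Sring K) : x * sElt K = Cm K (fst (phi K x)) * sElt K := by
  conv_lhs => rw [Srepr K x]
  rw [add_mul, add_mul, mul_assoc, mul_assoc, ss, mul_comm (tElt K) (sElt K), st]
  simp

lemma mul_t (x : Sring K) : x * tElt K = Cm K (fst (phi K x)) * tElt K := by
  conv_lhs => rw [Srepr K x]
  rw [add_mul, add_mul, mul_assoc, mul_assoc, st, tt]
  simp

lemma coeff_eq (b c : K) (h : b • sElt K + c • tElt K = 0) : b = 0 ∧ c = 0 := by
  have h2 := congrArg (phi K) h
  rw [map_add, map_smul, map_smul, phi_s, phi_t, map_zero] at h2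
  have h3 := congrArg (fun z : Tring K => snd z 0) h2
  have h4 := congrArg (fun z : Tring K => snd z 1) h2
  simp [Pi.single_apply] at h3 h4
  exact ⟨h3, h4⟩

lemma fst_phi_ms (b c : K) : fst (phi K (b • sElt K + c • tElt K)) = 0 := by
  rw [map_add, map_smul, map_smul, phi_s, phi_t]
  simp

lemma mem_m_of_fst (x : Sring K) (h : fst (phi K x) = 0) : x ∈ mIdeal K := by
  rw [mIdeal, Ideal.mem_span_pair]
  refine ⟨Cm K (snd (phi K x) 0), Cm K (snd (phi K x) 1), ?_⟩
  conv_rhs => rw [Srepr K x, h]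
  simp [smul_eq_mul, Cm]

lemma fst_of_mem_m (x : Sring K) (h : x ∈ mIdeal K) : fst (phi K x) = 0 := by
  rw [mIdeal, Ideal.mem_span_pair] at h
  obtain ⟨a, b, rfl⟩ := h
  simp [smul_eq_mul, map_mul, fst_add, fst_mul]

lemma u_mem_repr (u : Fin 2 → Sring K) (hu : u ∈ Usub K) :
    ∃ l m n : K, u 0 = l • tElt K + n • sElt K ∧ u 1 = m • sElt K + n • tElt K := by
  simp only [Usub] at hu
  rw [Submodule.mem_span_insert] at hu
  obtain ⟨r1, z, hz, rfl⟩ := hu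
  rw [Submodule.mem_span_insert] at hz
  obtain ⟨r2, z', hz', rfl⟩ := hz
  rw [Submodule.mem_span_singleton] at hz'
  obtain ⟨r3, rfl⟩ := hz'
  refine ⟨fst (phi K r1), fst (phi K r2), fst (phi K r3), ?_, ?_⟩
  · have h1 : r1 * tElt K = fst (phi K r1) • tElt K := by
      rw [mul_t]; exact (Algebra.smul_def _ _).symm
    have h3 : r3 * sElt K = fst (phi K r3) • sElt K := by
      rw [mul_s]; exact (Algebra.smul_def _ _).symm
    simp only [Pi.add_apply, Pi.smul_apply, Matrix.cons_val_zero, smul_eq_mul]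
    rw [h1, h3, mul_zero]
    ring
  · have h2 : r2 * sElt K = fst (phi K r2) • sElt K := by
      rw [mul_s]; exact (Algebra.smul_def _ _).symm
    have h3 : r3 * tElt K = fst (phi K r3) • tElt K := by
      rw [mul_t]; exact (Algebra.smul_def _ _).symm
    simp only [Pi.add_apply, Pi.smul_apply, Matrix.cons_val_one, Matrix.head_cons, Matrix.cons_val_zero, smul_eq_mul]
    rw [h2, h3, mul_zero]
    ring

lemma extract_s (a b : K) (h : (![a • sElt K, b • sElt K] : Fin 2 → Sring K) ∈ Usub K) :
    a = 0 := by
  obtain ⟨l, m, n, h0, h1⟩ := u_mem_repr K _ h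
  simp only [Matrix.cons_val_zero, Matrix.cons_val_one, Matrix.head_cons] at h0 h1
  have e1 : (n - a) • sElt K + l • tElt K = 0 := by
    rw [sub_smul]; rw [h0]; ring
  have e2 : (m - b) • sElt K + n • tElt K = 0 := by
    rw [sub_smul]; rw [h1]; ring
  obtain ⟨hna, -⟩ := coeff_eq K _ _ e1
  obtain ⟨-, hn⟩ := coeff_eq K _ _ e2
  exact (sub_eq_zero.mp hna).symm.trans hn

lemma extract_t (a b : K) (h : (![a • tElt K, b • tElt K] : Fin 2 → Sring K) ∈ Usub K) :
    b = 0 := by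
  obtain ⟨l, m, n, h0, h1⟩ := u_mem_repr K _ h
  simp only [Matrix.cons_val_zero, Matrix.cons_val_one, Matrix.head_cons] at h0 h1
  have e1 : n • sElt K + (l - a) • tElt K = 0 := by
    rw [sub_smul]; rw [h0]; ring
  have e2 : m • sElt K + (n - b) • tElt K = 0 := by
    rw [sub_smul]; rw [h1]; ring
  obtain ⟨hn, -⟩ := coeff_eq K _ _ e1
  obtain ⟨-, hnb⟩ := coeff_eq K _ _ e2
  exact (sub_eq_zero.mp hnb).symm.trans hn

def wN (K : Type) [Field K] : Nmod K := Submodule.Quotient.mk ![sElt K, 0]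

lemma mk_zero_iff (v : Fin 2 → Sring K) :
    (Submodule.Quotient.mk v : Nmod K) = 0 ↔ v ∈ Usub K :=
  Submodule.Quotient.mk_eq_zero _

lemma n0 (x : Nmod K) : (0 : Sring K) • x = 0 := by
  obtain ⟨p, rfl⟩ := Submodule.Quotient.mk_surjective (Usub K) x
  rw [← Submodule.Quotient.mk_smul, zero_smul (Sring K) p, Submodule.Quotient.mk_zero]

lemma n1 (r r' : Sring K) (x : Nmod K) : r • r' • x = (r * r') • x := by
  obtain ⟨p, rfl⟩ := Submodule.Quotient.mk_surjective (Usub K) x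
  rw [← Submodule.Quotient.mk_smul, ← Submodule.Quotient.mk_smul,
    ← Submodule.Quotient.mk_smul, smul_smul]

lemma n_add (r r' : Sring K) (x : Nmod K) : (r + r') • x = r • x + r' • x := by
  obtain ⟨p, rfl⟩ := Submodule.Quotient.mk_surjective (Usub K) x
  rw [← Submodule.Quotient.mk_smul, ← Submodule.Quotient.mk_smul,
    ← Submodule.Quotient.mk_smul, add_smul, Submodule.Quotient.mk_add]

lemma n2 (r : Sring K) (x : Nmod K) : r • -x = -(r • x) := by
  obtain ⟨p, rfl⟩ := Submodule.Quotient.mk_surjective (Usub K) x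
  rw [← Submodule.Quotient.mk_neg, ← Submodule.Quotient.mk_smul,
    ← Submodule.Quotient.mk_smul, ← Submodule.Quotient.mk_neg, smul_neg]

lemma n_one (x : Nmod K) : (1 : Sring K) • x = x := by
  obtain ⟨p, rfl⟩ := Submodule.Quotient.mk_surjective (Usub K) x
  rw [← Submodule.Quotient.mk_smul, one_smul]

lemma s_smul_w : sElt K • wN K = 0 := by
  rw [wN, ← Submodule.Quotient.mk_smul, mk_zero_iff]
  have : sElt K • (![sElt K, 0] : Fin 2 → Sring K) = 0 := by
    funext i
    fin_cases i <;> simp [smul_eq_mul, ss]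
  rw [this]; exact (Usub K).zero_mem

lemma t_smul_w : tElt K • wN K = 0 := by
  rw [wN, ← Submodule.Quotient.mk_smul, mk_zero_iff]
  have : tElt K • (![sElt K, 0] : Fin 2 → Sring K) = 0 := by
    funext i
    fin_cases i <;> simp [smul_eq_mul, mul_comm (tElt K) (sElt K), st]
  rw [this]; exact (Usub K).zero_mem

lemma r_smul_w (r : Sring K) : r • wN K = Cm K (fst (phi K r)) • wN K := by
  conv_lhs => rw [Srepr K r]
  rw [add_smul, add_smul, mul_smul, mul_smul, s_smul_w, t_smul_w, smul_zero, smul_zero]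
  simp

lemma w_ne : wN K ≠ 0 := by
  intro h
  rw [wN, mk_zero_iff] at h
  have : (![(1:K) • sElt K, (0:K) • sElt K] : Fin 2 → Sring K) ∈ Usub K := by
    have e : (![(1:K) • sElt K, (0:K) • sElt K] : Fin 2 → Sring K) = ![sElt K, 0] := by
      funext i; fin_cases i <;> simp
    rw [e]; exact h
  exact one_ne_zero (extract_s K 1 0 this)

lemma Cw_inj (a : K) (h : Cm K a • wN K = 0) : a = 0 := by
  rw [wN, ← Submodule.Quotient.mk_smul, mk_zero_iff] at h
  have e : Cm K a • (![sElt K, 0] : Fin 2 → Sring K)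
      = ![a • sElt K, (0:K) • sElt K] := by
    funext i; fin_cases i <;> simp [smul_eq_mul, Cm, ksmul_def]
  rw [e] at h
  exact extract_s K a 0 h

lemma mk01_eq (q : Sring K) : (Submodule.Quotient.mk ![(0:Sring K), q] : Nmod K)
    = q • Submodule.Quotient.mk ![(0:Sring K), 1] := by
  rw [← Submodule.Quotient.mk_smul]
  congr 1
  funext i; fin_cases i <;> simp

lemma mk0s_eq : (Submodule.Quotient.mk ![(0:Sring K), sElt K] : Nmod K) = 0 := by
  rw [mk_zero_iff]
  exact Submodule.subset_span (by simp [Set.mem_insert_iff])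

lemma mk0t_eq : (Submodule.Quotient.mk ![(0:Sring K), tElt K] : Nmod K) = - wN K := by
  rw [wN, eq_neg_iff_add_eq_zero, ← Submodule.Quotient.mk_add, mk_zero_iff]
  have e : (![(0:Sring K), tElt K] + ![sElt K, 0]) = ![sElt K, tElt K] := by
    funext i; fin_cases i <;> simp
  rw [e]
  exact Submodule.subset_span (by simp [Set.mem_insert_iff])

lemma s_smul_mk (p : Fin 2 → Sring K) :
    sElt K • (Submodule.Quotient.mk p : Nmod K) = Cm K (fst (phi K (p 0))) • wN K := by
  rw [← Submodule.Quotient.mk_smul]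
  have e : sElt K • p = Cm K (fst (phi K (p 0))) • (![sElt K, 0] : Fin 2 → Sring K)
      + Cm K (fst (phi K (p 1))) • (![0, sElt K] : Fin 2 → Sring K) := by
    funext i
    fin_cases i <;>
      simp [smul_eq_mul, Cm, ksmul_def, mul_comm (sElt K), mul_s K (p 0), mul_s K (p 1)]
  rw [e, Submodule.Quotient.mk_add, Submodule.Quotient.mk_smul, Submodule.Quotient.mk_smul]
  rw [show (Submodule.Quotient.mk ![(0:Sring K), sElt K] : Nmod K) = 0 from mk0s_eq K]
  rw [smul_zero, add_zero, wN]

lemma t_smul_mk (p : Fin 2 → Sring K) :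
    tElt K • (Submodule.Quotient.mk p : Nmod K) = Cm K (- fst (phi K (p 1))) • wN K := by
  rw [← Submodule.Quotient.mk_smul]
  have e : tElt K • p = Cm K (fst (phi K (p 0))) • (![tElt K, 0] : Fin 2 → Sring K)
      + Cm K (fst (phi K (p 1))) • (![0, tElt K] : Fin 2 → Sring K) := by
    funext i
    fin_cases i <;>
      simp [smul_eq_mul, Cm, ksmul_def, mul_comm (tElt K), mul_t K (p 0), mul_t K (p 1)]
  have ht0 : (Submodule.Quotient.mk ![tElt K, (0:Sring K)] : Nmod K) = 0 := by
    rw [mk_zero_iff]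
    exact Submodule.subset_span (by simp [Set.mem_insert_iff])
  have h1 : Cm K (fst (phi K (p 1))) • -wN K = -(Cm K (fst (phi K (p 1))) • wN K) :=
    n2 K _ _
  have h2 : Cm K (-fst (phi K (p 1))) • wN K = -(Cm K (fst (phi K (p 1))) • wN K) := by
    rw [Cm_neg]; exact neg_smul _ _
  rw [e, Submodule.Quotient.mk_add, Submodule.Quotient.mk_smul, Submodule.Quotient.mk_smul,
    ht0, smul_zero, zero_add, mk0t_eq, h1, h2]

lemma mtop_repr (x : Nmod K) (hx : x ∈ mIdeal K • (⊤ : Submodule (Sring K) (Nmod K))) :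
    ∃ c : K, x = Cm K c • wN K := by
  refine Submodule.smul_induction_on hx ?_ ?_
  · intro r hr n _
    rw [mIdeal, Ideal.mem_span_pair] at hr
    obtain ⟨a, b, rfl⟩ := hr
    obtain ⟨p, rfl⟩ := Submodule.Quotient.mk_surjective (Usub K) n
    rw [add_smul, mul_smul, mul_smul, s_smul_mk, t_smul_mk]
    have ea : a • Cm K (fst (phi K (p 0))) • wN K
        = (a * Cm K (fst (phi K (p 0)))) • wN K := n1 K _ _ _
    have eb : b • Cm K (-fst (phi K (p 1))) • wN K
        = (b * Cm K (-fst (phi K (p 1)))) • wN K := n1 K _ _ _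
    rw [ea, eb, r_smul_w K (a * _), r_smul_w K (b * _), ← n_add, ← Cm_add]
    exact ⟨_, rfl⟩
  · rintro x y ⟨c1, rfl⟩ ⟨c2, rfl⟩
    exact ⟨c1 + c2, by rw [Cm_add, n_add]⟩

lemma w_mem_mtop : wN K ∈ mIdeal K • (⊤ : Submodule (Sring K) (Nmod K)) := by
  have : wN K = sElt K • (Submodule.Quotient.mk ![1, 0] : Nmod K) := by
    rw [s_smul_mk]
    simp [Cm]
  rw [this]
  exact Submodule.smul_mem_smul (Submodule.subset_span (by simp [Set.mem_insert_iff]))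
    Submodule.mem_top

lemma ann_of_mtop (x : Nmod K) (hx : x ∈ mIdeal K • (⊤ : Submodule (Sring K) (Nmod K))) :
    sElt K • x = 0 ∧ tElt K • x = 0 := by
  obtain ⟨c, rfl⟩ := mtop_repr K x hx
  constructor
  · calc sElt K • Cm K c • wN K = (sElt K * Cm K c) • wN K := n1 K _ _ _
      _ = Cm K c • sElt K • wN K := by rw [mul_comm]; exact (n1 K _ _ _).symm
      _ = 0 := by rw [s_smul_w, smul_zero]
  · calc tElt K • Cm K c • wN K = (tElt K * Cm K c) • wN K := n1 K _ _ _
      _ = Cm K c • tElt K • wN K := by rw [mul_comm]; exact (n1 K _ _ _).symm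
      _ = 0 := by rw [t_smul_w, smul_zero]

lemma mk_mem_mtop (p : Fin 2 → Sring K) (h0 : p 0 ∈ mIdeal K) (h1 : p 1 ∈ mIdeal K) :
    (Submodule.Quotient.mk p : Nmod K) ∈ mIdeal K • (⊤ : Submodule (Sring K) (Nmod K)) := by
  have e : p = p 0 • (![1, 0] : Fin 2 → Sring K) + p 1 • (![0, 1] : Fin 2 → Sring K) := by
    funext i; fin_cases i <;> simp
  rw [e, Submodule.Quotient.mk_add, Submodule.Quotient.mk_smul, Submodule.Quotient.mk_smul]
  exact Submodule.add_mem _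
    (Submodule.smul_mem_smul h0 Submodule.mem_top)
    (Submodule.smul_mem_smul h1 Submodule.mem_top)

lemma ker_eq : LinearMap.ker (rowVecMulMap (M := Nmod K) (Xbar K)) =
      Submodule.pi Set.univ
        (fun _ : Fin 2 => mIdeal K • (⊤ : Submodule (Sring K) (Nmod K))) := by
  ext v
  rw [LinearMap.mem_ker, Submodule.mem_pi]
  constructor
  · intro hv
    have h := fun j => congrFun hv j
    simp only [rowVecMulMap, LinearMap.coe_mk, AddHom.coe_mk, Fin.sum_univ_two,
      Pi.zero_apply] at h
    obtain ⟨p0, hp0⟩ := Submodule.Quotient.mk_surjective (Usub K) (v 0)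
    obtain ⟨p1, hp1⟩ := Submodule.Quotient.mk_surjective (Usub K) (v 1)
    have h0 := h 0; have h1 := h 1; have h2 := h 2; have h3 := h 3
    rw [show Xbar K 0 0 = sElt K by simp [Xbar], show Xbar K 1 0 = 0 by simp [Xbar],
      zero_smul (Sring K) (v 1), add_zero, ← hp0, s_smul_mk] at h0
    rw [show Xbar K 0 1 = 0 by simp [Xbar], show Xbar K 1 1 = sElt K by simp [Xbar],
      zero_smul (Sring K) (v 0), zero_add, ← hp1, s_smul_mk] at h1
    rw [show Xbar K 0 2 = tElt K by simp [Xbar], show Xbar K 1 2 = 0 by simp [Xbar],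
      zero_smul (Sring K) (v 1), add_zero, ← hp0, t_smul_mk] at h2
    rw [show Xbar K 0 3 = 0 by simp [Xbar], show Xbar K 1 3 = tElt K by simp [Xbar],
      zero_smul (Sring K) (v 0), zero_add, ← hp1, t_smul_mk] at h3
    intro i _
    fin_cases i
    · show v 0 ∈ mIdeal K • ⊤
      rw [← hp0]
      refine mk_mem_mtop K p0 (mem_m_of_fst K _ (Cw_inj K _ h0)) (mem_m_of_fst K _ ?_)
      have := Cw_inj K _ h2
      simpa using this
    · show v 1 ∈ mIdeal K • ⊤
      rw [← hp1]
      refine mk_mem_mtop K p1 (mem_m_of_fst K _ (Cw_inj K _ h1)) (mem_m_of_fst K _ ?_)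
      have := Cw_inj K _ h3
      simpa using this
  · intro hv
    have h0 := ann_of_mtop K (v 0) (hv 0 trivial)
    have h1 := ann_of_mtop K (v 1) (hv 1 trivial)
    funext j
    show (∑ i, Xbar K i j • v i) = 0
    rw [Fin.sum_univ_two]
    fin_cases j
    · show Xbar K 0 0 • v 0 + Xbar K 1 0 • v 1 = 0
      rw [show Xbar K 0 0 = sElt K by simp [Xbar], show Xbar K 1 0 = 0 by simp [Xbar],
        n0 K (v 1), add_zero, h0.1]
    · show Xbar K 0 1 • v 0 + Xbar K 1 1 • v 1 = 0
      rw [show Xbar K 0 1 = 0 by simp [Xbar], show Xbar K 1 1 = sElt K by simp [Xbar],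
        n0 K (v 0), zero_add, h1.1]
    · show Xbar K 0 2 • v 0 + Xbar K 1 2 • v 1 = 0
      rw [show Xbar K 0 2 = tElt K by simp [Xbar], show Xbar K 1 2 = 0 by simp [Xbar],
        n0 K (v 1), add_zero, h0.2]
    · show Xbar K 0 3 • v 0 + Xbar K 1 3 • v 1 = 0
      rw [show Xbar K 0 3 = 0 by simp [Xbar], show Xbar K 1 3 = tElt K by simp [Xbar],
        n0 K (v 0), zero_add, h1.2]

lemma Cm_mul (a b : K) : Cm K (a * b) = Cm K a * Cm K b := map_mul _ _ _
lemma Cm_one : Cm K 1 = 1 := map_one _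
lemma Cm_zero : Cm K 0 = 0 := map_zero _

def x1 (K : Type) [Field K] : Fin 2 → Nmod K := ![wN K, 0]
def x2 (K : Type) [Field K] : Fin 2 → Nmod K := ![0, wN K]

lemma x1_mem : x1 K ∈ LinearMap.ker (rowVecMulMap (M := Nmod K) (Xbar K)) := by
  rw [ker_eq]
  refine Submodule.mem_pi.2 fun i _ => ?_
  fin_cases i
  · show x1 K 0 ∈ _
    rw [show x1 K 0 = wN K from rfl]
    exact w_mem_mtop K
  · show x1 K 1 ∈ _
    rw [show x1 K 1 = 0 from rfl]
    exact Submodule.zero_mem _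

lemma x2_mem : x2 K ∈ LinearMap.ker (rowVecMulMap (M := Nmod K) (Xbar K)) := by
  rw [ker_eq]
  refine Submodule.mem_pi.2 fun i _ => ?_
  fin_cases i
  · show x2 K 0 ∈ _
    rw [show x2 K 0 = 0 from rfl]
    exact Submodule.zero_mem _
  · show x2 K 1 ∈ _
    rw [show x2 K 1 = wN K from rfl]
    exact w_mem_mtop K

def y1 (K : Type) [Field K] : ↥(LinearMap.ker (rowVecMulMap (M := Nmod K) (Xbar K))) :=
  ⟨x1 K, x1_mem K⟩
def y2 (K : Type) [Field K] : ↥(LinearMap.ker (rowVecMulMap (M := Nmod K) (Xbar K))) :=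
  ⟨x2 K, x2_mem K⟩

lemma k0 (z : ↥(LinearMap.ker (rowVecMulMap (M := Nmod K) (Xbar K)))) :
    (0 : Sring K) • z = 0 := by
  refine Subtype.ext ?_
  show (0 : Sring K) • (z : Fin 2 → Nmod K) = 0
  funext i
  exact n0 K _

lemma k1 (r r' : Sring K) (z : ↥(LinearMap.ker (rowVecMulMap (M := Nmod K) (Xbar K)))) :
    r • r' • z = (r * r') • z := by
  refine Subtype.ext ?_
  show r • r' • (z : Fin 2 → Nmod K) = (r * r') • (z : Fin 2 → Nmod K)
  funext i
  exact n1 K _ _ _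

lemma kone (z : ↥(LinearMap.ker (rowVecMulMap (M := Nmod K) (Xbar K)))) :
    (1 : Sring K) • z = z := by
  refine Subtype.ext ?_
  show (1 : Sring K) • (z : Fin 2 → Nmod K) = z
  funext i
  exact n_one K _

lemma coords (z : ↥(LinearMap.ker (rowVecMulMap (M := Nmod K) (Xbar K)))) :
    ∃ a b : K, z = Cm K a • y1 K + Cm K b • y2 K := by
  have hz : (z : Fin 2 → Nmod K) ∈ Submodule.pi Set.univ
      (fun _ : Fin 2 => mIdeal K • (⊤ : Submodule (Sring K) (Nmod K))) := by
    rw [← ker_eq K]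
    exact z.2
  obtain ⟨a, ha⟩ := mtop_repr K _ (Submodule.mem_pi.1 hz 0 trivial)
  obtain ⟨b, hb⟩ := mtop_repr K _ (Submodule.mem_pi.1 hz 1 trivial)
  refine ⟨a, b, Subtype.ext ?_⟩
  show (z : Fin 2 → Nmod K) = Cm K a • x1 K + Cm K b • x2 K
  funext i
  fin_cases i
  · show (z : Fin 2 → Nmod K) 0 = Cm K a • x1 K 0 + Cm K b • x2 K 0
    rw [show x1 K 0 = wN K from rfl, show x2 K 0 = 0 from rfl, smul_zero, add_zero]
    exact ha
  · show (z : Fin 2 → Nmod K) 1 = Cm K a • x1 K 1 + Cm K b • x2 K 1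
    rw [show x1 K 1 = 0 from rfl, show x2 K 1 = wN K from rfl, smul_zero, zero_add]
    exact hb

lemma coords_zero (a b : K) (h : Cm K a • y1 K + Cm K b • y2 K = 0) : a = 0 ∧ b = 0 := by
  have h' := congrArg (Subtype.val) h
  have h0 := congrFun h' 0
  have h1 := congrFun h' 1
  constructor
  · apply Cw_inj K a
    have : Cm K a • x1 K 0 + Cm K b • x2 K 0 = 0 := h0
    rw [show x1 K 0 = wN K from rfl, show x2 K 0 = 0 from rfl, smul_zero, add_zero] at this
    exact this
  · apply Cw_inj K b
    have : Cm K a • x1 K 1 + Cm K b • x2 K 1 = 0 := h1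
    rw [show x1 K 1 = 0 from rfl, show x2 K 1 = wN K from rfl, smul_zero, zero_add] at this
    exact this

lemma r_smul_y1 (r : Sring K) : r • y1 K = Cm K (fst (phi K r)) • y1 K := by
  refine Subtype.ext ?_
  show r • x1 K = Cm K (fst (phi K r)) • x1 K
  funext i
  fin_cases i
  · show r • x1 K 0 = Cm K (fst (phi K r)) • x1 K 0
    rw [show x1 K 0 = wN K from rfl]
    exact r_smul_w K r
  · show r • x1 K 1 = Cm K (fst (phi K r)) • x1 K 1
    rw [show x1 K 1 = (0 : Nmod K) from rfl, smul_zero, smul_zero]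

lemma y1_ne : y1 K ≠ 0 := by
  intro h
  have := congrFun (congrArg Subtype.val h) 0
  exact w_ne K this

def Wsub (K : Type) [Field K] :
    Submodule (Sring K) ↥(LinearMap.ker (rowVecMulMap (M := Nmod K) (Xbar K))) :=
  Submodule.span _ {y1 K}

lemma cov1 : (⊥ : Submodule (Sring K)
    ↥(LinearMap.ker (rowVecMulMap (M := Nmod K) (Xbar K)))) ⋖ Wsub K := by
  constructor
  · rw [bot_lt_iff_ne_bot]
    intro h
    exact y1_ne K (Submodule.span_singleton_eq_bot.mp h)
  · intro Z h1 h2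
    obtain ⟨z, hzZ, hz0⟩ := (Submodule.ne_bot_iff Z).mp (ne_of_gt h1)
    have hzW : z ∈ Wsub K := le_of_lt h2 hzZ
    rw [Wsub, Submodule.mem_span_singleton] at hzW
    obtain ⟨r, hr⟩ := hzW
    have h3 : z = Cm K (fst (phi K r)) • y1 K := by rw [← hr, r_smul_y1]
    have ha : fst (phi K r) ≠ 0 := by
      intro h0
      exact hz0 (by rw [h3, h0, Cm_zero, k0])
    have hy1 : y1 K ∈ Z := by
      have e : Cm K (fst (phi K r))⁻¹ • z = y1 K := by
        rw [h3, k1, ← Cm_mul, inv_mul_cancel₀ ha, Cm_one, kone]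
      rw [← e]
      exact Z.smul_mem _ hzZ
    have hle : Wsub K ≤ Z := Submodule.span_le.2 (Set.singleton_subset_iff.2 hy1)
    exact lt_irrefl Z (h2.trans_le hle)

lemma y2_notin : y2 K ∉ Wsub K := by
  intro h
  rw [Wsub, Submodule.mem_span_singleton] at h
  obtain ⟨r, hr⟩ := h
  have h1 := congrFun (congrArg Subtype.val hr) 1
  have : r • x1 K 1 = x2 K 1 := h1
  rw [show x1 K 1 = (0 : Nmod K) from rfl, show x2 K 1 = wN K from rfl, smul_zero] at this
  exact w_ne K this.symm

lemma cov2 : Wsub K ⋖ (⊤ : Submodule (Sring K)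
    ↥(LinearMap.ker (rowVecMulMap (M := Nmod K) (Xbar K)))) := by
  constructor
  · rw [lt_top_iff_ne_top]
    intro h
    exact y2_notin K (h ▸ Submodule.mem_top)
  · intro Z h1 h2
    obtain ⟨z, hzZ, hzW⟩ := SetLike.exists_of_lt h1
    obtain ⟨a, b, hz⟩ := coords K z
    have hy1Z : y1 K ∈ Z := le_of_lt h1 (Submodule.mem_span_singleton_self _)
    have hb : b ≠ 0 := by
      intro h0
      apply hzW
      rw [hz, h0, Cm_zero, k0, add_zero]
      exact (Wsub K).smul_mem _ (Submodule.mem_span_singleton_self _)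
    have hy2Z : y2 K ∈ Z := by
      have e : y2 K = Cm K b⁻¹ • (z - Cm K a • y1 K) := by
        rw [hz, add_sub_cancel_left, k1, ← Cm_mul, inv_mul_cancel₀ hb, Cm_one, kone]
      rw [e]
      exact Z.smul_mem _ (Z.sub_mem hzZ (Z.smul_mem _ hy1Z))
    have htop : (⊤ : Submodule (Sring K) _) ≤ Z := by
      intro u _
      obtain ⟨a', b', hu⟩ := coords K u
      rw [hu]
      exact Z.add_mem (Z.smul_mem _ hy1Z) (Z.smul_mem _ hy2Z)
    exact lt_irrefl Z (h2.trans_le htop)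

def mySeries (K : Type) [Field K] : CompositionSeries
    (Submodule (Sring K) ↥(LinearMap.ker (rowVecMulMap (M := Nmod K) (Xbar K)))) where
  length := 2
  toFun := ![⊥, Wsub K, ⊤]
  step i := by
    fin_cases i
    · exact cov1 K
    · exact cov2 K

/-- The `S`-linear map `N² → N⁴`, `v ↦ v X̄`, has kernel `(mN)²`, the submodule of `N²`
consisting of vectors both of whose coordinates lie in `mN`; in particular the kernel is
nonzero (it has length 2, i.e. it admits a composition series of length 2). -/
theorem stmt_10 (K : Type) [Field K] :
    LinearMap.ker (rowVecMulMap (M := Nmod K) (Xbar K)) =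
      Submodule.pi Set.univ
        (fun _ : Fin 2 => mIdeal K • (⊤ : Submodule (Sring K) (Nmod K))) ∧
    LinearMap.ker (rowVecMulMap (M := Nmod K) (Xbar K)) ≠ ⊥ ∧
    ∃ c : CompositionSeries
        (Submodule (Sring K) ↥(LinearMap.ker (rowVecMulMap (M := Nmod K) (Xbar K)))),
      c.head = ⊥ ∧ c.last = ⊤ ∧ c.length = 2 := by
  refine ⟨ker_eq K, ?_, ⟨mySeries K, rfl, rfl, rfl⟩⟩
  intro hbot
  have hm := x1_mem K
  rw [hbot, Submodule.mem_bot] at hm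
  exact w_ne K (congrFun hm 0)


end
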